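/- For every n ≥ 2, there exist an alphabet Σ and a language L over Σ such that: L is n-piecewise testable; L is not (n−1)-piecewise testable; L is recognized by an NFA of depth n−1; and the minimal DFA recognizing L has depth 2^n − 1. -/

import Mathlib

/-- `subk k w` is the set of scattered subwords of `w` of length at most `k`. -/
def subk {α : Type*} (k : ℕ) (w : List α) : Set (List α) :=
  {u | u.length ≤ k ∧ u.Sublist w}

/-- Two words are `k`-equivalent if they have the same subwords of length at most `k`. -/
def kEquiv {α : Type*} (k : ℕ) (u v : List α) : Prop :=
  subk k u = subk k v

/-- A language is `k`-piecewise testable (Simon's characterization):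
`k`-equivalent words are equi-members. -/
def IsPT {α : Type*} (k : ℕ) (L : Language α) : Prop :=
  ∀ u v : List α, kEquiv k u v → (u ∈ L ↔ v ∈ L)

/-- A DFA is minimal if all states are reachable and pairwise distinguishable. -/
def IsMinimalDFA {α σ : Type*} (A : DFA α σ) : Prop :=
  (∀ q : σ, ∃ w : List α, A.eval w = q) ∧
  ∀ p q : σ,
    (∀ w : List α, (A.evalFrom p w ∈ A.accept ↔ A.evalFrom q w ∈ A.accept)) → p = q

/-- There is a simple path (pairwise distinct states) with `m` transitions in the DFA `A`. -/
def DFAHasSimplePath {α σ : Type*} (A : DFA α σ) (m : ℕ) : Prop :=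
  ∃ (qs : Fin (m + 1) → σ) (as : Fin m → α),
    Function.Injective qs ∧ ∀ i : Fin m, A.step (qs i.castSucc) (as i) = qs i.succ

/-- The depth of a DFA: the number of transitions on a longest simple path. -/
noncomputable def dfaDepth {α σ : Type*} (A : DFA α σ) : ℕ :=
  sSup {m | DFAHasSimplePath A m}

/-- There is a simple path (pairwise distinct states) with `m` transitions in the NFA `A`. -/
def NFAHasSimplePath {α σ : Type*} (A : NFA α σ) (m : ℕ) : Prop :=
  ∃ (qs : Fin (m + 1) → σ) (as : Fin m → α),
    Function.Injective qs ∧ ∀ i : Fin m, qs i.succ ∈ A.step (qs i.castSucc) (as i)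

/-- The depth of an NFA: the number of transitions on a longest simple path. -/
noncomputable def nfaDepth {α σ : Type*} (A : NFA α σ) : ℕ :=
  sSup {m | NFAHasSimplePath A m}

open List


section Helpers

variable {γ : Type*}

/-- First-occurrence splitting for sublists. -/
lemma cons_sublist_split [DecidableEq γ] {c : γ} {l y : List γ} (h : c :: l <+ y) :
    ∃ y₀ y₁, y = y₀ ++ c :: y₁ ∧ c ∉ y₀ ∧ l <+ y₁ := by
  induction y with
  | nil => simp at h
  | cons a y' ih =>
    by_cases hac : a = c
    · subst hac
      exact ⟨[], y', rfl, by simp, (List.cons_sublist_cons.mp h)⟩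
    · have h' : c :: l <+ y' := by
        cases h with
        | cons _ h => exact h
        | cons_cons _ h => exact absurd rfl hac
      obtain ⟨y₀, y₁, rfl, hc, hl⟩ := ih h'
      exact ⟨a :: y₀, y₁, rfl, by simp [hc, Ne.symm hac], hl⟩

lemma cons_sublist_of_notMem {a : γ} {l y₁ : List γ} :
    ∀ {y₀ : List γ}, a :: l <+ y₀ ++ y₁ → a ∉ y₀ → a :: l <+ y₁ := by
  intro y₀
  induction y₀ with
  | nil => intro h _; simpa using h
  | cons b y₀' ih =>
    intro h hb
    cases h with
    | cons _ h => exact ih h (fun hx => hb (List.mem_cons_of_mem _ hx))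
    | cons_cons _ h => simp at hb

lemma reverse_sublist_iff {l₁ l₂ : List γ} : l₁.reverse <+ l₂.reverse ↔ l₁ <+ l₂ := by
  constructor
  · intro h; simpa using h.reverse
  · exact fun h => h.reverse

end Helpers

section Rdec

variable {γ : Type*} [DecidableEq γ]

/-- Right-to-left decomposition witness. -/
inductive Rdec : List γ → γ → List γ → Prop
  | nil (q : γ) (y : List γ) : q ∉ y → Rdec [] q y
  | cons (c q : γ) (cs y₀ y₁ : List γ) : c ∉ y₀ → Rdec cs q y₁ →
      Rdec (c :: cs) q (y₀ ++ c :: y₁)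

lemma rdec_iff {cs : List γ} {q : γ} {y : List γ} :
    Rdec cs q y ↔ cs <+ y ∧ ¬ (cs ++ [q]) <+ y := by
  constructor
  · intro h
    induction h with
    | nil q y hq =>
      refine ⟨List.nil_sublist y, ?_⟩
      simpa using hq
    | cons c q cs y₀ y₁ hc _ ih =>
      constructor
      · have : [] ++ c :: cs <+ y₀ ++ c :: y₁ :=
          List.Sublist.append (List.nil_sublist y₀) (List.cons_sublist_cons.mpr ih.1)
        simpa using this
      · intro hcon
        have hcon' : c :: (cs ++ [q]) <+ y₀ ++ c :: y₁ := by simpa using hcon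
        have := cons_sublist_of_notMem hcon' hc
        exact ih.2 (List.cons_sublist_cons.mp this)
  · intro ⟨h1, h2⟩
    induction cs generalizing y with
    | nil =>
      refine Rdec.nil q y ?_
      intro hq
      exact h2 (by simpa using hq)
    | cons c cs ih =>
      obtain ⟨y₀, y₁, rfl, hc, hl⟩ := cons_sublist_split h1
      refine Rdec.cons c q cs y₀ y₁ hc (ih hl ?_)
      intro hcon
      have : c :: (cs ++ [q]) <+ y₀ ++ c :: y₁ :=
        ((List.cons_sublist_cons.mpr hcon).trans (List.sublist_append_right _ _))
      exact h2 (by simpa using this)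

lemma rdec_snoc {cs : List γ} {c q : γ} {y y₂ : List γ}
    (h : Rdec cs c y) (hq : q ∉ y₂) : Rdec (cs ++ [c]) q (y ++ c :: y₂) := by
  induction h with
  | nil c y hc => exact Rdec.cons c q [] y y₂ hc (Rdec.nil q y₂ hq)
  | cons d c' ds y₀ y₁ hd _ ih =>
    have := Rdec.cons d q (ds ++ [c']) y₀ (y₁ ++ c' :: y₂) hd ih
    simpa using this

lemma rdec_append_last {cs : List γ} {q i : γ} {y : List γ}
    (h : Rdec cs q y) (hiq : i ≠ q) : Rdec cs q (y ++ [i]) := by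
  induction h with
  | nil q y hq =>
    refine Rdec.nil q (y ++ [i]) ?_
    simp only [List.mem_append, List.mem_singleton]
    rintro (h | h)
    · exact hq h
    · exact hiq h.symm
  | cons c q cs y₀ y₁ hc _ ih =>
    have := Rdec.cons c q cs y₀ (y₁ ++ [i]) hc (ih hiq)
    simpa using this

end Rdec
section Alv

variable {n : ℕ}

/-- Survival predicate (reading the reversed word). -/
inductive Alv : Fin n → List (Fin n) → Prop
  | nil (q : Fin n) : Alv q []
  | lt {q i : Fin n} {x : List (Fin n)} : i < q → Alv q x → Alv q (i :: x)
  | gts {q i : Fin n} {x : List (Fin n)} : q < i → Alv q x → Alv q (i :: x)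
  | gtj {q i : Fin n} {x : List (Fin n)} : q < i → Alv i x → Alv q (i :: x)

lemma alv_cons_iff {q i : Fin n} {x : List (Fin n)} :
    Alv q (i :: x) ↔ (i < q ∧ Alv q x) ∨ (q < i ∧ (Alv q x ∨ Alv i x)) := by
  constructor
  · intro h
    cases h with
    | lt h h' => exact Or.inl ⟨h, h'⟩
    | gts h h' => exact Or.inr ⟨h, Or.inl h'⟩
    | gtj h h' => exact Or.inr ⟨h, Or.inr h'⟩
  · rintro (⟨h, h'⟩ | ⟨h, h' | h'⟩)
    · exact Alv.lt h h'
    · exact Alv.gts h h'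
    · exact Alv.gtj h h'

lemma alv_to_pattern {q : Fin n} {x : List (Fin n)} (h : Alv q x) :
    ∃ cs : List (Fin n), List.Chain (· < ·) q cs ∧ cs <+ x ∧ ¬ (q :: cs) <+ x := by
  have key : ∃ cs : List (Fin n), List.Chain (· < ·) q cs ∧ Rdec cs.reverse q x.reverse := by
    induction h with
    | nil q => exact ⟨[], List.Chain.nil, Rdec.nil q [] (by simp)⟩
    | lt hlt _ ih =>
      obtain ⟨cs, hch, hr⟩ := ih
      exact ⟨cs, hch, by simpa using rdec_append_last hr (ne_of_lt hlt)⟩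
    | gts hlt _ ih =>
      obtain ⟨cs, hch, hr⟩ := ih
      exact ⟨cs, hch, by simpa using rdec_append_last hr (ne_of_gt hlt)⟩
    | @gtj q i x hlt _ ih =>
      obtain ⟨cs, hch, hr⟩ := ih
      refine ⟨i :: cs, List.Chain.cons hlt hch, ?_⟩
      have := rdec_snoc (q := q) (y₂ := []) hr (by simp)
      simpa using this
  obtain ⟨cs, hch, hr⟩ := key
  rw [rdec_iff] at hr
  refine ⟨cs, hch, reverse_sublist_iff.mp hr.1, fun hcon => hr.2 ?_⟩
  have : (q :: cs).reverse <+ x.reverse := hcon.reverse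
  simpa using this

lemma alv_of_pattern :
    ∀ (x : List (Fin n)) (q : Fin n) (cs : List (Fin n)),
      List.Chain (· < ·) q cs → cs <+ x → ¬ (q :: cs) <+ x → Alv q x := by
  intro x
  induction x with
  | nil =>
    intro q cs _ hsub _
    rw [List.sublist_nil] at hsub
    exact hsub ▸ Alv.nil q
  | cons i x' ih =>
    intro q cs hch hsub hneg
    rcases eq_or_ne i q with rfl | hiq
    · -- the head equals q: contradiction with hneg
      exfalso
      have hcs : cs <+ x' := by
        cases hsub with
        | cons _ h => exact h
        | cons_cons _ h =>
          -- cs = i :: t with chain i (i :: t): i < i, absurd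
          cases hch with
          | cons_cons hlt _ => exact absurd hlt (lt_irrefl _)
      exact hneg (List.cons_sublist_cons.mpr hcs)
    · by_cases hx' : cs <+ x'
      · -- skip the head
        have halv : Alv q x' := ih q cs hch hx' (fun hcon => hneg (hcon.cons i))
        rcases lt_trichotomy i q with h | h | h
        · exact Alv.lt h halv
        · exact absurd h hiq
        · exact Alv.gts h halv
      · -- forced: cs = i :: cs', jump
        cases hsub with
        | cons _ h => exact absurd h hx'
        | @cons_cons l₁ _ _ h =>
          -- cs = i :: l₁, l₁ <+ x'
          cases hch with
          | cons_cons hqi hch' =>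
            exact Alv.gtj hqi (ih i _ hch' h (by simpa using hx'))

end Alv

section SWdyn

variable {n : ℕ}

def mask (n j : ℕ) : Finset (Fin n) := Finset.univ.filter (fun i => (i : ℕ) < j)

lemma mem_mask {j : ℕ} {q : Fin n} : q ∈ mask n j ↔ (q : ℕ) < j := by
  simp [mask]

def dstep (S : Finset (Fin n)) (a : Fin n) : Finset (Fin n) :=
  if a ∈ S then S.erase a ∪ mask n (a : ℕ) else S

def SW (w : List (Fin n)) : Finset (Fin n) := w.foldl dstep Finset.univ

lemma mem_dstep_lt {q a : Fin n} {S : Finset (Fin n)} (h : a < q) :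
    q ∈ dstep S a ↔ q ∈ S := by
  unfold dstep
  split
  · simp only [Finset.mem_union, Finset.mem_erase, mem_mask]
    constructor
    · rintro (⟨_, hq⟩ | hq)
      · exact hq
      · exact absurd hq (by exact_mod_cast not_lt_of_gt h)
    · intro hq
      exact Or.inl ⟨(ne_of_gt h), hq⟩
  · exact Iff.rfl

lemma not_mem_dstep_eq {q : Fin n} {S : Finset (Fin n)} : q ∉ dstep S q := by
  unfold dstep
  split
  · simp only [Finset.mem_union, Finset.mem_erase, mem_mask]
    rintro (⟨hne, _⟩ | hlt)
    · exact hne rfl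
    · exact absurd hlt (lt_irrefl _)
  · assumption

lemma mem_dstep_gt {q a : Fin n} {S : Finset (Fin n)} (h : q < a) :
    q ∈ dstep S a ↔ (q ∈ S ∨ a ∈ S) := by
  unfold dstep
  split
  · simp only [Finset.mem_union, Finset.mem_erase, mem_mask]
    constructor
    · rintro (⟨_, hq⟩ | _)
      · exact Or.inl hq
      · exact Or.inr ‹a ∈ S›
    · intro _
      exact Or.inr (by exact_mod_cast h)
  · constructor
    · exact Or.inl
    · rintro (hq | ha)
      · exact hq
      · exact absurd ha ‹a ∉ S›

lemma mem_SW_iff_alv (w : List (Fin n)) (q : Fin n) : q ∈ SW w ↔ Alv q w.reverse := by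
  induction w using List.reverseRecOn generalizing q with
  | nil => simpa [SW] using Alv.nil q
  | append_singleton w i ih =>
    have hfold : SW (w ++ [i]) = dstep (SW w) i := by simp [SW]
    rw [hfold, List.reverse_append]
    simp only [List.reverse_cons, List.reverse_nil, List.nil_append, List.singleton_append]
    rcases lt_trichotomy i q with h | h | h
    · rw [mem_dstep_lt h, ih, alv_cons_iff]
      constructor
      · exact fun ha => Or.inl ⟨h, ha⟩
      · rintro (⟨_, ha⟩ | ⟨h', _⟩)
        · exact ha
        · exact absurd h' (not_lt_of_gt h)
    · subst h
      constructor
      · intro hmem; exact absurd hmem not_mem_dstep_eq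
      · rw [alv_cons_iff]
        rintro (⟨h', _⟩ | ⟨h', _⟩) <;> exact absurd h' (lt_irrefl _)
    · rw [mem_dstep_gt h, ih, ih, alv_cons_iff]
      constructor
      · rintro (ha | ha)
        · exact Or.inr ⟨h, Or.inl ha⟩
        · exact Or.inr ⟨h, Or.inr ha⟩
      · rintro (⟨h', _⟩ | ⟨_, ha | ha⟩)
        · exact absurd h' (not_lt_of_gt h)
        · exact Or.inl ha
        · exact Or.inr ha

end SWdyn
section Invariance

variable {n : ℕ}

lemma kequiv_sublist {k : ℕ} {u v s : List (Fin n)} (h : kEquiv k u v)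
    (hs : s.length ≤ k) : s <+ u ↔ s <+ v := by
  have := Set.ext_iff.mp h s
  simp only [subk, Set.mem_setOf_eq] at this
  constructor
  · intro hsu; exact ((this.mp ⟨hs, hsu⟩) ).2
  · intro hsv; exact ((this.mpr ⟨hs, hsv⟩) ).2

lemma chain_length_le {q : Fin n} {cs : List (Fin n)} (h : List.Chain (· < ·) q cs) :
    (q :: cs).length ≤ n := by
  have hpw : List.Pairwise (· < ·) (q :: cs) := List.isChain_iff_pairwise.mp h
  have hnd : (q :: cs).Nodup := hpw.imp ne_of_lt
  simpa [Fintype.card_fin] using hnd.length_le_card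

lemma alv_invariant {u v : List (Fin n)} (h : kEquiv n u v) (q : Fin n) :
    Alv q u.reverse → Alv q v.reverse := by
  intro halv
  obtain ⟨cs, hch, hsub, hneg⟩ := alv_to_pattern halv
  have hlen : (q :: cs).length ≤ n := chain_length_le hch
  have hlen' : cs.length ≤ n := by simpa using Nat.le_of_succ_le (by simpa using hlen)
  refine alv_of_pattern v.reverse q cs hch ?_ ?_
  · rw [List.sublist_reverse_iff]
    rw [List.sublist_reverse_iff] at hsub
    exact (kequiv_sublist h (by simpa using hlen')).mp hsub
  · intro hcon
    apply hneg
    rw [List.sublist_reverse_iff] at hcon ⊢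
    exact (kequiv_sublist h (by simpa using hlen)).mpr hcon

lemma SW_zero_invariant {u v : List (Fin n)} (h : kEquiv n u v) (q : Fin n) :
    q ∈ SW u ↔ q ∈ SW v := by
  rw [mem_SW_iff_alv, mem_SW_iff_alv]
  exact ⟨alv_invariant h q, alv_invariant (h.symm) q⟩

end Invariance

section WitnessWords

/-- the block `[0, 1, ..., k-1]` -/
def bw (k : ℕ) : List ℕ := List.range k

/-- `Wd j k = bw k ++ bw (k-1) ++ ... ++ bw j` -/
def Wd (j : ℕ) : ℕ → List ℕ
  | 0 => []
  | (k+1) => if k + 1 < j then [] else bw (k+1) ++ Wd j k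

lemma Wd_eq_nil_of_lt {j k : ℕ} (h : k < j) : Wd j k = [] := by
  cases k with
  | zero => rfl
  | succ k => simp [Wd, h]

lemma Wd_eq_of_le {j k : ℕ} (h : j ≤ k + 1) : Wd j (k + 1) = bw (k+1) ++ Wd j k := by
  simp [Wd, Nat.not_lt.mpr h]

lemma Wd_shift (j : ℕ) : ∀ k, Wd j k <+ Wd (j+1) (k+1)
  | 0 => List.nil_sublist _
  | (k+1) => by
    by_cases h : k + 1 < j
    · rw [Wd_eq_nil_of_lt h]; exact List.nil_sublist _
    · rw [Wd_eq_of_le (Nat.not_lt.mp h), Wd_eq_of_le (by omega)]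
      exact List.Sublist.append (List.range_sublist.mpr (by omega)) (Wd_shift j k)

lemma Wd_peel : ∀ k j, j ≤ k → Wd j k = Wd (j+1) k ++ bw j := by
  intro k
  induction k with
  | zero =>
    intro j hj
    interval_cases j
    simp [Wd, bw]
  | succ k ih =>
    intro j hj
    rcases Nat.lt_or_ge k j with h | h
    · -- j = k+1
      have hjk : j = k + 1 := by omega
      subst hjk
      rw [Wd_eq_of_le (le_refl _), Wd_eq_nil_of_lt (by omega), Wd_eq_nil_of_lt (by omega)]
      simp
    · rw [Wd_eq_of_le (by omega), Wd_eq_of_le (by omega), ih j h, List.append_assoc]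

lemma goalA : ∀ k, 2 ≤ k → ∀ s : List ℕ, s.length + 1 ≤ k → s <+ Wd 2 k →
    s <+ Wd 3 k ++ [1, 0] := by
  intro k hk
  induction k, hk using Nat.le_induction with
  | base =>
    intro s hlen hsub
    have h22 : Wd 2 2 = [0, 1] := by
      rw [Wd_eq_of_le (by omega), Wd_eq_nil_of_lt (by omega)]
      simp [bw]; decide
    rw [h22] at hsub
    rw [Wd_eq_nil_of_lt (by omega), List.nil_append]
    match s, hlen with
    | [], _ => exact List.nil_sublist _
    | [c], _ =>
      rw [List.singleton_sublist] at hsub ⊢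
      simpa using (by simpa using hsub : c = 0 ∨ c = 1).symm
  | succ k hk ih =>
    intro s hlen hsub
    rw [Wd_eq_of_le (by omega)] at hsub
    rw [List.sublist_append_iff] at hsub
    obtain ⟨s₁, s₂, rfl, hs₁, hs₂⟩ := hsub
    rcases List.eq_nil_or_concat s₁ with rfl | ⟨_, _, hne⟩
    · -- s = s₂ <+ Wd 2 k <+ Wd 3 (k+1)
      have : s₂ <+ Wd 3 (k+1) := (hs₂.trans (Wd_shift 2 k))
      simpa using this.trans (List.sublist_append_left _ _)
    · have hs₁ne : s₁ ≠ [] := by subst hne; simp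
      have hlen₂ : s₂.length + 1 ≤ k := by
        have : 1 ≤ s₁.length := List.length_pos_iff.mpr hs₁ne
        have := List.length_append (as := s₁) (bs := s₂)
        omega
      have := ih s₂ hlen₂ hs₂
      rw [Wd_eq_of_le (by omega), List.append_assoc]
      exact List.Sublist.append hs₁ this

lemma goalBkey : ∀ k, ∀ t : List ℕ, t.length + 3 ≤ k → t <+ Wd 3 k → t <+ Wd 4 k := by
  intro k
  induction k with
  | zero => intro t h; omega
  | succ k ih =>
    intro t hlen hsub
    rcases Nat.lt_or_ge (k+1) 4 with h4 | h4
    · -- k+1 = 3, t = []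
      have : t.length = 0 := by omega
      rw [List.length_eq_zero_iff] at this
      subst this
      exact List.nil_sublist _
    · rw [Wd_eq_of_le (by omega)] at hsub
      rw [List.sublist_append_iff] at hsub
      obtain ⟨t₁, t₂, rfl, ht₁, ht₂⟩ := hsub
      rcases List.eq_nil_or_concat t₁ with rfl | ⟨_, _, hne⟩
      · exact (ht₂.trans (Wd_shift 3 k))
      · have ht₁ne : t₁ ≠ [] := by subst hne; simp
        have hlen₂ : t₂.length + 3 ≤ k := by
          have : 1 ≤ t₁.length := List.length_pos_iff.mpr ht₁ne
          have := List.length_append (as := t₁) (bs := t₂)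
          omega
        rw [Wd_eq_of_le (by omega)]
        exact List.Sublist.append ht₁ (ih t₂ hlen₂ ht₂)

lemma sublist_pair {r : List ℕ} {a b : ℕ} (h : r <+ [a, b]) :
    r = [] ∨ r = [a] ∨ r = [b] ∨ r = [a, b] := by
  cases h with
  | cons _ h =>
    rcases List.sublist_singleton.mp h with rfl | rfl
    · exact Or.inl rfl
    · exact Or.inr (Or.inr (Or.inl rfl))
  | cons_cons _ h =>
    rcases List.sublist_singleton.mp h with rfl | rfl
    · exact Or.inr (Or.inl rfl)
    · exact Or.inr (Or.inr (Or.inr rfl))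

lemma goalB {n : ℕ} (hn : 2 ≤ n) : ∀ s : List ℕ, s.length + 1 ≤ n →
    s <+ Wd 3 n ++ [1, 0] → s <+ Wd 2 n := by
  intro s hlen hsub
  rw [List.sublist_append_iff] at hsub
  obtain ⟨t, r, rfl, ht, hr⟩ := hsub
  have hpeel2 : Wd 2 n = Wd 3 n ++ bw 2 := Wd_peel n 2 hn
  have hbw2 : bw 2 = [0, 1] := by decide
  rcases sublist_pair hr with rfl | rfl | rfl | rfl
  · simpa using ht.trans (by rw [hpeel2]; exact List.sublist_append_left _ _)
  · rw [hpeel2, hbw2]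
    exact List.Sublist.append ht (by decide)
  · rw [hpeel2, hbw2]
    exact List.Sublist.append ht (by decide)
  · -- the hard case
    have hlent : t.length + 3 ≤ n := by
      simp only [List.length_append, List.length_cons, List.length_nil] at hlen
      omega
    have hn3 : 3 ≤ n := by omega
    have hkey : t <+ Wd 4 n := goalBkey n t hlent ht
    have hpeel3 : Wd 3 n = Wd 4 n ++ bw 3 := Wd_peel n 3 hn3
    rw [hpeel2, hpeel3, List.append_assoc]
    refine List.Sublist.append hkey ?_
    rw [hbw2]
    have hbw3 : bw 3 = [0, 1, 2] := by decide
    rw [hbw3]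
    decide

end WitnessWords
section FinAutomaton

variable {n : ℕ} [NeZero n]
open Fin.NatCast

def castL (l : List ℕ) : List (Fin n) := l.map (Nat.cast)

lemma fin_cast_val {c : ℕ} (h : c < n) : (((c : ℕ) : Fin n) : ℕ) = c :=
  Fin.val_cast_of_lt h

lemma mem_dstep_iff {q a : Fin n} {S : Finset (Fin n)} :
    q ∈ dstep S a ↔ (q ∈ S ∧ q ≠ a) ∨ (a ∈ S ∧ (q : ℕ) < (a : ℕ)) := by
  unfold dstep
  split
  · simp only [Finset.mem_union, Finset.mem_erase, mem_mask]
    constructor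
    · rintro (⟨h1, h2⟩ | h)
      · exact Or.inl ⟨h2, h1⟩
      · exact Or.inr ⟨‹a ∈ S›, h⟩
    · rintro (⟨h1, h2⟩ | ⟨_, h⟩)
      · exact Or.inl ⟨h2, h1⟩
      · exact Or.inr h
  · constructor
    · intro h
      refine Or.inl ⟨h, ?_⟩
      rintro rfl
      exact ‹q ∉ S› h
    · rintro (⟨h, _⟩ | ⟨h, _⟩)
      · exact h
      · exact absurd h ‹a ∉ S›

lemma inner_block {k : ℕ} (hk : k ≤ n) : ∀ (d c : ℕ), c + 1 + d = k →
    List.foldl dstep ((mask n k).erase ((c : ℕ) : Fin n)) (castL (List.range' (c+1) d))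
      = mask n (k-1) := by
  intro d
  induction d with
  | zero =>
    intro c hc
    simp only [List.range', castL, List.map_nil, List.foldl_nil]
    have hcn : c < n := by omega
    ext i
    simp only [Finset.mem_erase, mem_mask, Ne, Fin.ext_iff, fin_cast_val hcn]
    omega
  | succ d ih =>
    intro c hc
    have hc1n : c + 1 < n := by omega
    have hcn : c < n := by omega
    rw [List.range'_succ]
    simp only [castL, List.map_cons, List.foldl_cons]
    have hstep : dstep ((mask n k).erase ((c : ℕ) : Fin n)) ((c+1 : ℕ) : Fin n)
        = (mask n k).erase ((c+1 : ℕ) : Fin n) := by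
      have hmem : ((c+1 : ℕ) : Fin n) ∈ (mask n k).erase ((c : ℕ) : Fin n) := by
        simp only [Finset.mem_erase, mem_mask, Ne, Fin.ext_iff, fin_cast_val hcn,
          fin_cast_val hc1n]
        omega
      unfold dstep
      rw [if_pos hmem]
      ext i
      simp only [Finset.mem_union, Finset.mem_erase, mem_mask, Ne, Fin.ext_iff,
        fin_cast_val hcn, fin_cast_val hc1n]
      omega
    rw [hstep]
    have := ih (c+1) (by omega)
    simpa [castL] using this

lemma block_eval {k : ℕ} (h1 : 1 ≤ k) (hk : k ≤ n) :
    List.foldl dstep (mask n k) (castL (bw k)) = mask n (k-1) := by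
  have h0n : (0 : ℕ) < n := Nat.pos_of_ne_zero (NeZero.ne n)
  have hrange : bw k = 0 :: List.range' 1 (k-1) := by
    rw [bw, List.range_eq_range']
    have : k = (k - 1) + 1 := by omega
    rw [this, List.range'_succ]
    simp
  rw [hrange]
  simp only [castL, List.map_cons, List.foldl_cons]
  have hstep : dstep (mask n k) ((0 : ℕ) : Fin n) = (mask n k).erase ((0:ℕ) : Fin n) := by
    have hmem : ((0:ℕ) : Fin n) ∈ mask n k := by
      simp only [mem_mask, fin_cast_val h0n]
      omega
    unfold dstep
    rw [if_pos hmem]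
    ext i
    simp only [Finset.mem_union, Finset.mem_erase, mem_mask, fin_cast_val h0n]
    omega
  rw [hstep]
  exact inner_block hk (k-1) 0 (by omega)

lemma Wd_eval {j : ℕ} (hj : 1 ≤ j) : ∀ k, j - 1 ≤ k → k ≤ n →
    List.foldl dstep (mask n k) (castL (Wd j k)) = mask n (j-1) := by
  intro k
  induction k with
  | zero =>
    intro h1 _
    have : j = 1 := by omega
    subst this
    simp [Wd, castL]
  | succ k ih =>
    intro h1 hkn
    by_cases hlt : k + 1 < j
    · have : j - 1 = k + 1 := by omega
      rw [Wd_eq_nil_of_lt hlt]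
      simp [castL, this]
    · rw [Wd_eq_of_le (by omega)]
      simp only [castL, List.map_append, List.foldl_append]
      rw [show (List.map Nat.cast (bw (k+1)) : List (Fin n)) = castL (bw (k+1)) from rfl,
        block_eval (by omega) hkn]
      simpa [castL] using ih (by omega) (by omega)

lemma mask_univ : mask n n = (Finset.univ : Finset (Fin n)) := by
  ext i
  simp [mem_mask, i.isLt]

/-- The witness words -/
def uwd (n : ℕ) [NeZero n] : List (Fin n) := castL (Wd 2 n)
def vwd (n : ℕ) [NeZero n] : List (Fin n) := castL (Wd 3 n ++ [1, 0])

lemma SW_uwd (hn : 2 ≤ n) : (0 : Fin n) ∈ SW (uwd n) := by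
  have := Wd_eval (j := 2) (by omega) n (by omega) (le_refl n)
  rw [SW, uwd, ← mask_univ, this]
  simp only [mem_mask, Fin.val_zero]
  omega

lemma SW_vwd (hn : 2 ≤ n) : (0 : Fin n) ∉ SW (vwd n) := by
  have h1n : (1:ℕ) < n := by omega
  have h0n : (0:ℕ) < n := by omega
  have heval := Wd_eval (j := 3) (by omega) n (by omega) (le_refl n)
  rw [SW, vwd, ← mask_univ]
  simp only [castL, List.map_append, List.foldl_append]
  rw [show (List.map Nat.cast (Wd 3 n) : List (Fin n)) = castL (Wd 3 n) from rfl, heval]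
  simp only [List.map_cons, List.map_nil, List.foldl_cons, List.foldl_nil]
  have hs1 : dstep (mask n (3-1)) ((1:ℕ) : Fin n) = mask n 1 := by
    have hmem : ((1:ℕ) : Fin n) ∈ mask n (3-1) := by
      simp only [mem_mask, fin_cast_val h1n]; omega
    unfold dstep
    rw [if_pos hmem]
    ext i
    simp only [Finset.mem_union, Finset.mem_erase, mem_mask, Ne, Fin.ext_iff,
      fin_cast_val h1n]
    omega
  rw [hs1]
  have hs0 : dstep (mask n 1) ((0:ℕ) : Fin n) = ∅ := by
    have hmem : ((0:ℕ) : Fin n) ∈ mask n 1 := by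
      simp only [mem_mask, fin_cast_val h0n]; omega
    unfold dstep
    rw [if_pos hmem]
    ext i
    simp only [Finset.mem_union, Finset.mem_erase, mem_mask, Ne, Fin.ext_iff,
      fin_cast_val h0n, Finset.notMem_empty, iff_false]
    omega
  rw [hs0]
  simp

lemma kequiv_witness (hn : 2 ≤ n) : kEquiv (n-1) (uwd n) (vwd n) := by
  apply Set.ext
  intro s
  simp only [subk, Set.mem_setOf_eq]
  constructor
  · rintro ⟨hlen, hsub⟩
    refine ⟨hlen, ?_⟩
    rw [uwd, castL, List.sublist_map_iff] at hsub
    obtain ⟨t, ht, rfl⟩ := hsub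
    have hlent : t.length + 1 ≤ n := by
      rw [List.length_map] at hlen
      omega
    have := goalA n hn t hlent ht
    exact this.map _
  · rintro ⟨hlen, hsub⟩
    refine ⟨hlen, ?_⟩
    rw [vwd, castL, List.sublist_map_iff] at hsub
    obtain ⟨t, ht, rfl⟩ := hsub
    have hlent : t.length + 1 ≤ n := by
      rw [List.length_map] at hlen
      omega
    have := goalB hn t hlent ht
    exact this.map _

/-- The DFA -/
def theDFA (n : ℕ) [NeZero n] : DFA (Fin n) (Finset (Fin n)) :=
  ⟨dstep, Finset.univ, {S | (0 : Fin n) ∈ S}⟩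

def theL (n : ℕ) [NeZero n] : Language (Fin n) := (theDFA n).accepts

lemma mem_theL {w : List (Fin n)} : w ∈ theL n ↔ (0 : Fin n) ∈ SW w := Iff.rfl

end FinAutomaton
section Minimality

variable {n : ℕ} [NeZero n]

lemma reach_aux : ∀ (l : List (Fin n)) (F : Finset (Fin n)), List.Pairwise (· > ·) l →
    (∀ a ∈ l, ∀ b ∈ F, a < b) →
    List.foldl dstep (Finset.univ \ F) l = Finset.univ \ (F ∪ l.toFinset) := by
  intro l
  induction l with
  | nil => intro F _ _; simp
  | cons i l ih =>
    intro F hpw hF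
    have hiF : i ∉ F := fun h => absurd (hF i (List.mem_cons_self) i h) (lt_irrefl i)
    have hstep : dstep (Finset.univ \ F) i = Finset.univ \ insert i F := by
      have hmem : i ∈ Finset.univ \ F := by simp [hiF]
      unfold dstep
      rw [if_pos hmem]
      ext x
      simp only [Finset.mem_union, Finset.mem_erase, Finset.mem_sdiff, Finset.mem_univ,
        true_and, mem_mask, Finset.mem_insert]
      constructor
      · rintro (⟨hxi, hxF⟩ | hx)
        · exact fun h => h.elim hxi hxF
        · intro h
          rcases h with rfl | hxF
          · exact absurd hx (lt_irrefl _)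
          · exact absurd (hF i (List.mem_cons_self) x hxF) (by
              intro hcon
              exact absurd (lt_trans (show (x:Fin n) < i from hx) hcon) (lt_irrefl _))
      · intro h
        push_neg at h
        exact Or.inl ⟨h.1, h.2⟩
    simp only [List.foldl_cons, hstep]
    rw [ih (insert i F) hpw.of_cons ?hcond]
    · congr 1
      ext x
      simp only [Finset.mem_union, Finset.mem_insert, List.toFinset_cons]
      tauto
    case hcond =>
      intro a ha b hb
      rcases Finset.mem_insert.mp hb with rfl | hbF
      · exact (List.pairwise_cons.mp hpw).1 a ha
      · exact hF a (List.mem_cons_of_mem _ ha) b hbF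

lemma dfa_reachable (S : Finset (Fin n)) :
    ∃ w : List (Fin n), List.foldl dstep Finset.univ w = S := by
  classical
  set C := Finset.univ \ S with hC
  refine ⟨(C.sort (· ≤ ·)).reverse, ?_⟩
  have hpw : List.Pairwise (· > ·) (C.sort (· ≤ ·)).reverse := by
    rw [List.pairwise_reverse]
    exact (C.sortedLT_sort).pairwise
  have := reach_aux (C.sort (· ≤ ·)).reverse ∅ hpw (by simp)
  simp only [Finset.sdiff_empty, Finset.empty_union] at this
  rw [this]
  have htf : ((C.sort (· ≤ ·)).reverse).toFinset = C := by
    ext x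
    simp [List.mem_toFinset, Finset.mem_sort]
  rw [htf, hC]
  ext x
  simp

lemma dstep_high {j a : Fin n} {X : Finset (Fin n)} (h : (a : ℕ) < (j : ℕ)) :
    j ∈ dstep X a ↔ j ∈ X :=
  mem_dstep_lt (Fin.lt_def.mpr h)

lemma distinguish_aux : ∀ (i : ℕ) (hi : i < n) (S T : Finset (Fin n)),
    (⟨i, hi⟩ : Fin n) ∈ S → (⟨i, hi⟩ : Fin n) ∉ T →
    (∀ j : Fin n, i < (j : ℕ) → (j ∈ S ↔ j ∈ T)) →
    ∃ w : List (Fin n), (0 : Fin n) ∈ List.foldl dstep S w ∧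
      (0 : Fin n) ∉ List.foldl dstep T w := by
  intro i
  induction i with
  | zero =>
    intro hi S T hS hT _
    have h0 : (⟨0, hi⟩ : Fin n) = 0 := by ext; simp
    rw [h0] at hS hT
    exact ⟨[], by simpa using hS, by simpa using hT⟩
  | succ i ih =>
    intro hi S T hS hT hagree
    have hin : i < n := Nat.lt_of_succ_lt hi
    set c : Fin n := ⟨i, hin⟩ with hc
    set d : Fin n := ⟨i+1, hi⟩ with hd
    have hcd : c ≠ d := by simp [hc, hd, Fin.ext_iff]
    have hcd' : (c : ℕ) < (d : ℕ) := by simp [hc, hd]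
    set S₁ := dstep (dstep S c) d with hS₁
    set T₁ := dstep (dstep T c) d with hT₁
    have hdS' : d ∈ dstep S c := mem_dstep_iff.mpr (Or.inl ⟨hS, hcd.symm⟩)
    have hcS₁ : c ∈ S₁ := mem_dstep_iff.mpr (Or.inr ⟨hdS', hcd'⟩)
    have hdT' : d ∉ dstep T c := by
      rw [mem_dstep_iff]
      rintro (⟨h, _⟩ | ⟨_, h⟩)
      · exact hT h
      · exact absurd h (by simp [hc, hd])
    have hcT₁ : c ∉ T₁ := by
      rw [hT₁, mem_dstep_iff]
      rintro (⟨h, _⟩ | ⟨h, _⟩)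
      · exact not_mem_dstep_eq h
      · exact hdT' h
    have hagree₁ : ∀ j : Fin n, i < (j : ℕ) → (j ∈ S₁ ↔ j ∈ T₁) := by
      intro j hj
      rcases Nat.lt_or_ge (i+1) (j : ℕ) with hgt | hle
      · have hdj : (d : ℕ) < (j : ℕ) := by show i + 1 < (j : ℕ); exact hgt
        have hcj : (c : ℕ) < (j : ℕ) := by show i < (j : ℕ); omega
        rw [hS₁, hT₁, dstep_high hdj, dstep_high hcj, dstep_high hdj, dstep_high hcj]
        exact hagree j (by omega)
      · have : j = d := by ext; simp [hd]; omega
        subst this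
        simp only [hS₁, hT₁]
        constructor
        · intro h; exact absurd h not_mem_dstep_eq
        · intro h; exact absurd h not_mem_dstep_eq
    obtain ⟨w', hw1, hw2⟩ := ih hin S₁ T₁ hcS₁ hcT₁ hagree₁
    exact ⟨c :: d :: w', by simpa [hS₁] using hw1, by simpa [hT₁] using hw2⟩

lemma theDFA_minimal (hn : 2 ≤ n) : IsMinimalDFA (theDFA n) := by
  constructor
  · intro S
    exact dfa_reachable S
  · intro S T hST
    by_contra hne
    have hsymm : ((S \ T) ∪ (T \ S)).Nonempty := by
      rw [Finset.nonempty_iff_ne_empty]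
      intro hcon
      apply hne
      ext x
      constructor
      · intro hx
        by_contra hx'
        have : x ∈ (S \ T) ∪ (T \ S) := by simp [hx, hx']
        simp [hcon] at this
      · intro hx
        by_contra hx'
        have : x ∈ (S \ T) ∪ (T \ S) := by simp [hx, hx']
        simp [hcon] at this
    set m := ((S \ T) ∪ (T \ S)).max' hsymm with hm
    have hmmem := ((S \ T) ∪ (T \ S)).max'_mem hsymm
    have hagree : ∀ j : Fin n, (m : ℕ) < (j : ℕ) → (j ∈ S ↔ j ∈ T) := by
      intro j hj
      by_contra hcon
      have hjmem : j ∈ (S \ T) ∪ (T \ S) := by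
        simp only [Finset.mem_union, Finset.mem_sdiff]
        tauto
      have := Finset.le_max' _ j hjmem
      rw [← hm] at this
      exact absurd (lt_of_le_of_lt this (Fin.lt_def.mpr hj)) (lt_irrefl _)
    have hmeta : (⟨(m : ℕ), m.isLt⟩ : Fin n) = m := by ext; rfl
    rw [← hm] at hmmem
    rcases Finset.mem_union.mp hmmem with hmem | hmem
    · obtain ⟨w, hw1, hw2⟩ := distinguish_aux (m : ℕ) m.isLt S T
        (by rw [hmeta]; exact (Finset.mem_sdiff.mp hmem).1)
        (by rw [hmeta]; exact (Finset.mem_sdiff.mp hmem).2) hagree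
      have := hST w
      simp only [theDFA, DFA.evalFrom, Set.mem_setOf_eq] at this
      rw [this] at hw1
      exact hw2 hw1
    · obtain ⟨w, hw1, hw2⟩ := distinguish_aux (m : ℕ) m.isLt T S
        (by rw [hmeta]; exact (Finset.mem_sdiff.mp hmem).1)
        (by rw [hmeta]; exact (Finset.mem_sdiff.mp hmem).2)
        (fun j hj => (hagree j hj).symm)
      have := hST w
      simp only [theDFA, DFA.evalFrom, Set.mem_setOf_eq] at this
      rw [← this] at hw1
      exact hw2 hw1

end Minimality
section Depth

lemma nat_sSup_eq {s : Set ℕ} {a : ℕ} (h1 : a ∈ s) (h2 : ∀ x ∈ s, x ≤ a) : sSup s = a :=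
  le_antisymm (csSup_le ⟨a, h1⟩ h2) (le_csSup ⟨a, h2⟩ h1)

variable {n : ℕ} [NeZero n]

def sval (S : Finset (Fin n)) : ℕ := ∑ i ∈ S, 2^(i : ℕ)

lemma sval_mask : ∀ j, j ≤ n → sval (mask n j) = 2^j - 1 := by
  intro j
  induction j with
  | zero =>
    intro _
    have : mask n 0 = ∅ := by
      ext i; simp [mem_mask]
    simp [sval, this]
  | succ j ih =>
    intro hj
    have hjn : j < n := by omega
    have hmask : mask n (j+1) = insert (⟨j, hjn⟩ : Fin n) (mask n j) := by
      ext i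
      simp only [mem_mask, Finset.mem_insert, Fin.ext_iff]
      omega
    have hnot : (⟨j, hjn⟩ : Fin n) ∉ mask n j := by simp [mem_mask]
    rw [sval, hmask, Finset.sum_insert hnot]
    have := ih (by omega)
    rw [sval] at this
    rw [this]
    have h1 : 1 ≤ 2^j := Nat.one_le_two_pow
    show 2^j + (2^j - 1) = 2^(j+1) - 1
    rw [pow_succ]
    omega

lemma sval_univ : sval (Finset.univ : Finset (Fin n)) = 2^n - 1 := by
  rw [← mask_univ]
  exact sval_mask n (le_refl n)

lemma sval_eq_zero {S : Finset (Fin n)} : sval S = 0 ↔ S = ∅ := by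
  constructor
  · intro h
    by_contra hne
    obtain ⟨x, hx⟩ := Finset.nonempty_iff_ne_empty.mpr hne
    have : 2^(x:ℕ) ≤ sval S := by
      rw [sval]
      exact Finset.single_le_sum (f := fun i : Fin n => 2^(i:ℕ)) (fun i _ => Nat.zero_le _) hx
    have h2 : 1 ≤ 2^(x:ℕ) := Nat.one_le_two_pow
    omega
  · intro h; simp [sval, h]

lemma sval_dstep_min {S : Finset (Fin n)} (hS : S.Nonempty) :
    sval (dstep S (S.min' hS)) = sval S - 1 := by
  set m := S.min' hS with hm
  have hmem : m ∈ S := S.min'_mem hS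
  have hsplit : 2^(m:ℕ) + sval (S.erase m) = sval S := by
    rw [sval, sval]
    exact Finset.add_sum_erase S (fun i : Fin n => 2^(i:ℕ)) hmem
  have hdisj : Disjoint (S.erase m) (mask n (m : ℕ)) := by
    rw [Finset.disjoint_right]
    intro x hx
    rw [mem_mask] at hx
    intro hxS
    have := S.min'_le x (Finset.mem_of_mem_erase hxS)
    rw [← hm] at this
    exact absurd (lt_of_le_of_lt this (Fin.lt_def.mpr hx)) (lt_irrefl _)
  have : dstep S m = S.erase m ∪ mask n (m : ℕ) := by
    unfold dstep
    rw [if_pos hmem]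
  rw [this, sval, Finset.sum_union hdisj]
  have h1 : ∑ i ∈ S.erase m, 2^(i:ℕ) = sval (S.erase m) := rfl
  have h2 : ∑ i ∈ mask n (m : ℕ), 2^(i:ℕ) = 2^(m:ℕ) - 1 :=
    sval_mask (m : ℕ) (le_of_lt m.isLt)
  have h3 : 1 ≤ 2^(m:ℕ) := Nat.one_le_two_pow
  rw [h1, h2]
  omega

def pick (S : Finset (Fin n)) : Fin n := if h : S.Nonempty then S.min' h else 0

def pathS (n : ℕ) [NeZero n] : ℕ → Finset (Fin n)
  | 0 => Finset.univ
  | (k+1) => dstep (pathS n k) (pick (pathS n k))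

lemma pathS_val : ∀ k, k ≤ 2^n - 1 → sval (pathS n k) = 2^n - 1 - k := by
  intro k
  induction k with
  | zero => simpa [pathS] using sval_univ
  | succ k ih =>
    intro hk
    have hval := ih (by omega)
    have hne : (pathS n k).Nonempty := by
      rw [Finset.nonempty_iff_ne_empty]
      intro hcon
      rw [← sval_eq_zero] at hcon
      omega
    show sval (dstep (pathS n k) (pick (pathS n k))) = 2^n - 1 - (k+1)
    rw [show pick (pathS n k) = (pathS n k).min' hne from dif_pos hne, sval_dstep_min hne,
      hval]
    omega

lemma theDFA_depth_lower : DFAHasSimplePath (theDFA n) (2^n - 1) := by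
  refine ⟨fun i => pathS n i, fun i => pick (pathS n i), ?_, ?_⟩
  · intro i j hij
    have hi : (i : ℕ) ≤ 2^n - 1 := by omega
    have hj : (j : ℕ) ≤ 2^n - 1 := by omega
    have hvi := pathS_val (i : ℕ) hi
    have hvj := pathS_val (j : ℕ) hj
    have : (i : ℕ) = (j : ℕ) := by
      have hij' : pathS n (i : ℕ) = pathS n (j : ℕ) := hij
      rw [hij'] at hvi
      rw [hvj] at hvi
      omega
    exact Fin.ext this
  · intro i
    show dstep (pathS n i.castSucc) (pick (pathS n i.castSucc)) = pathS n i.succ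
    have h1 : (i.castSucc : ℕ) = (i : ℕ) := rfl
    have h2 : (i.succ : ℕ) = (i : ℕ) + 1 := rfl
    rw [h1, h2]
    rfl

lemma theDFA_depth_upper {m : ℕ} (h : DFAHasSimplePath (theDFA n) m) : m ≤ 2^n - 1 := by
  obtain ⟨qs, _, hinj, _⟩ := h
  have := Fintype.card_le_of_injective qs hinj
  rw [Fintype.card_fin, Fintype.card_finset, Fintype.card_fin] at this
  have h1 : 1 ≤ 2^n := Nat.one_le_two_pow
  omega

lemma theDFA_depth : dfaDepth (theDFA n) = 2^n - 1 :=
  nat_sSup_eq theDFA_depth_lower (fun _ hx => theDFA_depth_upper hx)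

end Depth

section TheNFA

variable {n : ℕ} [NeZero n]

def theNFA (n : ℕ) [NeZero n] : NFA (Fin n) (Fin n) :=
  ⟨fun q a => if q = a then {p | p < a} else {q}, Set.univ, {0}⟩

lemma theNFA_stepSet (S : Finset (Fin n)) (a : Fin n) :
    (theNFA n).stepSet ↑S a = ↑(dstep S a) := by
  ext p
  simp only [NFA.stepSet, Set.mem_iUnion, Finset.coe_sort_coe, Finset.mem_coe,
    mem_dstep_iff, theNFA]
  constructor
  · rintro ⟨q, hq, hp⟩
    by_cases hqa : q = a
    · subst hqa
      rw [if_pos rfl] at hp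
      exact Or.inr ⟨hq, Fin.lt_def.mp hp⟩
    · rw [if_neg hqa] at hp
      simp only [Set.mem_singleton_iff] at hp
      subst hp
      exact Or.inl ⟨hq, hqa⟩
  · rintro (⟨hp, hpa⟩ | ⟨ha, hpa⟩)
    · exact ⟨p, hp, by rw [if_neg hpa]; simp⟩
    · exact ⟨a, ha, by rw [if_pos rfl]; exact Fin.lt_def.mpr hpa⟩

lemma theNFA_evalFrom : ∀ (w : List (Fin n)) (S : Finset (Fin n)),
    (theNFA n).evalFrom ↑S w = ↑(List.foldl dstep S w) := by
  intro w
  induction w with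
  | nil => intro S; rfl
  | cons a w ih =>
    intro S
    show (theNFA n).evalFrom ((theNFA n).stepSet ↑S a) w = _
    rw [theNFA_stepSet]
    exact ih (dstep S a)

lemma theNFA_accepts : (theNFA n).accepts = theL n := by
  ext w
  rw [NFA.mem_accepts]
  have : (theNFA n).start = ↑(Finset.univ : Finset (Fin n)) := by
    simp [theNFA]
  rw [this, theNFA_evalFrom]
  constructor
  · rintro ⟨q, hq, hmem⟩
    have : q = 0 := by simpa [theNFA] using hq
    subst this
    exact mem_theL.mpr (by simpa [SW] using hmem)
  · intro h
    exact ⟨0, by simp [theNFA], by simpa [SW] using mem_theL.mp h⟩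

lemma theNFA_depth (hn : 2 ≤ n) : nfaDepth (theNFA n) = n - 1 := by
  apply nat_sSup_eq
  · -- lower bound: the descending chain
    refine ⟨fun i => ⟨n - 1 - (i : ℕ), by omega⟩, fun i => ⟨n - 1 - (i : ℕ), by omega⟩, ?_, ?_⟩
    · intro i j hij
      rw [Fin.ext_iff] at hij ⊢
      simp only at hij
      omega
    · intro i
      have hic : (i.castSucc : ℕ) = (i : ℕ) := rfl
      have his : (i.succ : ℕ) = (i : ℕ) + 1 := rfl
      show _ ∈ (theNFA n).step _ _
      simp only [theNFA, hic, his, if_true]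
      simp only [Set.mem_setOf_eq, Fin.lt_def]
      show n - 1 - ((i:ℕ)+1) < n - 1 - (i:ℕ)
      omega
  · intro m hm
    obtain ⟨qs, _, hinj, _⟩ := hm
    have := Fintype.card_le_of_injective qs hinj
    rw [Fintype.card_fin, Fintype.card_fin] at this
    omega

end TheNFA
section Transfer

variable {α σ τ : Type*}

lemma minimal_path_transfer (D : DFA α σ) (E : DFA α τ)
    (hD : IsMinimalDFA D) (hE : IsMinimalDFA E) (hacc : D.accepts = E.accepts) :
    ∀ m, DFAHasSimplePath D m → DFAHasSimplePath E m := by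
  classical
  obtain ⟨hreach, hdist⟩ := hD
  obtain ⟨_, hdistE⟩ := hE
  set φ : σ → τ := fun q => E.eval (Classical.choose (hreach q)) with hφ
  have hkey : ∀ w : List α, φ (D.eval w) = E.eval w := by
    intro w
    set w₀ := Classical.choose (hreach (D.eval w)) with hw₀
    have hspec : D.eval w₀ = D.eval w := Classical.choose_spec (hreach (D.eval w))
    apply hdistE
    intro x
    have e1 : E.evalFrom (E.eval w₀) x = E.eval (w₀ ++ x) :=
      (E.evalFrom_of_append E.start w₀ x).symm
    have e2 : E.evalFrom (E.eval w) x = E.eval (w ++ x) :=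
      (E.evalFrom_of_append E.start w x).symm
    rw [e1, e2, ← DFA.mem_accepts, ← DFA.mem_accepts, ← hacc,
      DFA.mem_accepts, DFA.mem_accepts]
    show D.evalFrom D.start (w₀ ++ x) ∈ D.accept ↔ D.evalFrom D.start (w ++ x) ∈ D.accept
    rw [D.evalFrom_of_append, D.evalFrom_of_append]
    show D.evalFrom (D.eval w₀) x ∈ D.accept ↔ D.evalFrom (D.eval w) x ∈ D.accept
    rw [hspec]
  have hstep : ∀ (q : σ) (a : α), φ (D.step q a) = E.step (φ q) a := by
    intro q a
    have hspec : D.eval (Classical.choose (hreach q)) = q := Classical.choose_spec (hreach q)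
    set w₀ := Classical.choose (hreach q) with hw₀
    have h1 : D.step q a = D.eval (w₀ ++ [a]) := by
      show D.step q a = D.evalFrom D.start (w₀ ++ [a])
      rw [D.evalFrom_of_append]
      show D.step q a = D.evalFrom (D.eval w₀) [a]
      rw [hspec]
      rfl
    rw [h1, hkey]
    show E.evalFrom E.start (w₀ ++ [a]) = E.step (φ q) a
    rw [E.evalFrom_of_append]
    show E.step (E.eval w₀) a = E.step (φ q) a
    rw [show E.eval w₀ = φ q from by rw [← hspec]; exact (hkey w₀).symm]
  have hinj : Function.Injective φ := by
    intro q q' hqq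
    have hspec : D.eval (Classical.choose (hreach q)) = q := Classical.choose_spec (hreach q)
    have hspec' : D.eval (Classical.choose (hreach q')) = q' :=
      Classical.choose_spec (hreach q')
    set w := Classical.choose (hreach q)
    set w' := Classical.choose (hreach q')
    have hE : E.eval w = E.eval w' := by
      have a1 : E.eval w = φ q := by rw [← hspec]; exact (hkey w).symm
      have a2 : E.eval w' = φ q' := by rw [← hspec']; exact (hkey w').symm
      rw [a1, a2, hqq]
    apply hdist
    intro x
    have d1 : D.evalFrom q x = D.eval (w ++ x) := by
      rw [← hspec]
      exact (D.evalFrom_of_append D.start w x).symm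
    have d2 : D.evalFrom q' x = D.eval (w' ++ x) := by
      rw [← hspec']
      exact (D.evalFrom_of_append D.start w' x).symm
    rw [d1, d2, ← DFA.mem_accepts, ← DFA.mem_accepts, hacc,
      DFA.mem_accepts, DFA.mem_accepts]
    show E.evalFrom E.start (w ++ x) ∈ E.accept ↔ E.evalFrom E.start (w' ++ x) ∈ E.accept
    rw [E.evalFrom_of_append, E.evalFrom_of_append]
    show E.evalFrom (E.eval w) x ∈ E.accept ↔ E.evalFrom (E.eval w') x ∈ E.accept
    rw [hE]
  rintro m ⟨qs, as, hqs, hpath⟩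
  exact ⟨φ ∘ qs, as, hinj.comp hqs, fun i => by
    show E.step (φ (qs i.castSucc)) (as i) = φ (qs i.succ)
    rw [← hstep, hpath i]⟩

lemma minimal_depth_eq (D : DFA α σ) (E : DFA α τ)
    (hD : IsMinimalDFA D) (hE : IsMinimalDFA E) (hacc : D.accepts = E.accepts) :
    dfaDepth D = dfaDepth E := by
  unfold dfaDepth
  congr 1
  ext m
  exact ⟨minimal_path_transfer D E hD hE hacc m,
    minimal_path_transfer E D hE hD hacc.symm m⟩

end Transfer


/-- For every `n ≥ 2` there is an `n`-PT language that is not `(n-1)`-PT, recognized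
by an NFA of depth `n - 1`, whose minimal DFA has depth `2^n - 1`. -/
theorem stmt9 (n : ℕ) (hn : 2 ≤ n) :
    ∃ (α : Type) (_ : Fintype α) (L : Language α),
      IsPT n L ∧
      ¬ IsPT (n - 1) L ∧
      (∃ (σ : Type) (_ : Fintype σ) (A : NFA α σ), A.accepts = L ∧ nfaDepth A = n - 1) ∧
      (∃ (σ : Type) (_ : Fintype σ) (D : DFA α σ),
        IsMinimalDFA D ∧ D.accepts = L ∧ dfaDepth D = 2 ^ n - 1) ∧
      (∀ (σ : Type) (D : DFA α σ),
        IsMinimalDFA D → D.accepts = L → dfaDepth D = 2 ^ n - 1) := by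
  have : NeZero n := ⟨by omega⟩
  refine ⟨Fin n, inferInstance, theL n, ?_, ?_, ?_, ?_, ?_⟩
  · -- IsPT n
    intro u v h
    rw [mem_theL, mem_theL]
    exact SW_zero_invariant h 0
  · -- not IsPT (n-1)
    intro hPT
    have := hPT (uwd n) (vwd n) (kequiv_witness hn)
    rw [mem_theL, mem_theL] at this
    exact SW_vwd hn (this.mp (SW_uwd hn))
  · exact ⟨Fin n, inferInstance, theNFA n, theNFA_accepts, theNFA_depth hn⟩
  · exact ⟨Finset (Fin n), inferInstance, theDFA n, theDFA_minimal hn, rfl, theDFA_depth⟩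
  · intro σ D hmin hacc
    rw [minimal_depth_eq D (theDFA n) hmin (theDFA_minimal hn) hacc]
    exact theDFA_depth
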